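/- Value-at-risk is comonotonic additive: for every α ∈ (0,1], every real random variable Z on a probability space (Ω, ℱ, P), and all non-decreasing functions f, g : ℝ → ℝ, one has VaR_α(f∘Z + g∘Z) = VaR_α(f∘Z) + VaR_α(g∘Z). -/

import Mathlib

open MeasureTheory Set

/-- The `α`-quantile of a real random variable `X`, as an extended real number,
`q_α(X) = inf {x ∈ ℝ : P[X ≤ x] ≥ α}` with the convention `inf ∅ = ∞`. -/
noncomputable def quantileE {Ω : Type*} [MeasurableSpace Ω] (μ : Measure Ω)
    (X : Ω → ℝ) (α : ℝ) : EReal :=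
  sInf ((fun x : ℝ => (x : EReal)) '' {x : ℝ | ENNReal.ofReal α ≤ μ {ω | X ω ≤ x}})

/-- Value-at-risk at level `α`: `VaR_α(X) = q_α(-X)`. -/
noncomputable def VaRE {Ω : Type*} [MeasurableSpace Ω] (μ : Measure Ω)
    (X : Ω → ℝ) (α : ℝ) : EReal :=
  quantileE μ (fun ω => - X ω) α

section Aux

variable {Ω : Type*} [MeasurableSpace Ω]

/-- The set of reals whose infimum is `VaR_α(X)`. -/
def VaRset (μ : Measure Ω) (X : Ω → ℝ) (α : ℝ) : Set ℝ :=
  {x : ℝ | ENNReal.ofReal α ≤ μ {ω | -x ≤ X ω}}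

lemma VaRE_eq_sInf (μ : Measure Ω) (X : Ω → ℝ) (α : ℝ) :
    VaRE μ X α = sInf ((fun x : ℝ => (x : EReal)) '' VaRset μ X α) := by
  unfold VaRE quantileE VaRset
  congr 2
  ext x
  simp only [Set.mem_setOf_eq, neg_le]

lemma VaRset_upper {μ : Measure Ω} {X : Ω → ℝ} {α : ℝ} {x y : ℝ}
    (hx : x ∈ VaRset μ X α) (hxy : x ≤ y) : y ∈ VaRset μ X α := by
  refine le_trans hx (measure_mono fun ω hω => ?_)
  simp only [Set.mem_setOf_eq] at *
  linarith

lemma VaRset_bddBelow {μ : Measure Ω} [IsProbabilityMeasure μ] {X : Ω → ℝ} {α : ℝ}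
    (hα : 0 < α) (hX : Measurable X) : BddBelow (VaRset μ X α) := by
  have hmeas : ∀ n : ℕ, MeasurableSet {ω | (n : ℝ) ≤ X ω} :=
    fun n => measurableSet_le measurable_const hX
  have hanti : Antitone fun n : ℕ => {ω | (n : ℝ) ≤ X ω} := by
    intro n m hnm ω hω
    simp only [Set.mem_setOf_eq] at *
    have : (n : ℝ) ≤ (m : ℝ) := Nat.cast_le.mpr hnm
    linarith
  have hempty : (⋂ n : ℕ, {ω | (n : ℝ) ≤ X ω}) = (∅ : Set Ω) := by
    ext ω
    simp only [Set.mem_iInter, Set.mem_setOf_eq, Set.mem_empty_iff_false, iff_false, not_forall,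
      not_le]
    obtain ⟨n, hn⟩ := exists_nat_gt (X ω)
    exact ⟨n, hn⟩
  have htend : Filter.Tendsto (fun n : ℕ => μ {ω | (n : ℝ) ≤ X ω}) Filter.atTop (nhds 0) := by
    have := tendsto_measure_iInter_atTop (μ := μ)
      (fun n => (hmeas n).nullMeasurableSet) hanti ⟨0, measure_ne_top μ _⟩
    rw [hempty, measure_empty] at this
    exact this
  have hpos : (0 : ENNReal) < ENNReal.ofReal α := ENNReal.ofReal_pos.mpr hα
  obtain ⟨n, hn⟩ : ∃ n : ℕ, μ {ω | (n : ℝ) ≤ X ω} < ENNReal.ofReal α := by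
    have := (htend.eventually_lt_const hpos).exists
    exact this
  refine ⟨-(n : ℝ), fun x hx => ?_⟩
  by_contra h
  push_neg at h
  have hsub : {ω | -x ≤ X ω} ⊆ {ω | (n : ℝ) ≤ X ω} := by
    intro ω hω
    simp only [Set.mem_setOf_eq] at *
    linarith
  exact absurd (le_trans hx (measure_mono hsub)) (not_le.mpr hn)

lemma VaRset_csInf_mem {μ : Measure Ω} [IsProbabilityMeasure μ] {X : Ω → ℝ} {α : ℝ}
    (hne : (VaRset μ X α).Nonempty) (hbdd : BddBelow (VaRset μ X α)) (hX : Measurable X) :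
    sInf (VaRset μ X α) ∈ VaRset μ X α := by
  set c := sInf (VaRset μ X α) with hc
  have hmemn : ∀ n : ℕ, c + 1 / (n + 1) ∈ VaRset μ X α := by
    intro n
    have hpos : (0 : ℝ) < 1 / (n + 1) := by positivity
    obtain ⟨a, ha, halt⟩ := exists_lt_of_csInf_lt hne (show c < c + 1 / (n + 1) by linarith)
    exact VaRset_upper ha halt.le
  have hmeas : ∀ n : ℕ, MeasurableSet {ω | -(c + 1 / (n + 1)) ≤ X ω} :=
    fun n => measurableSet_le measurable_const hX
  have hanti : Antitone fun n : ℕ => {ω | -(c + 1 / ((n : ℝ) + 1)) ≤ X ω} := by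
    intro n m hnm ω hω
    simp only [Set.mem_setOf_eq] at *
    have h1 : (1 : ℝ) / (m + 1) ≤ 1 / (n + 1) := by
      apply one_div_le_one_div_of_le
      · positivity
      · have : (n : ℝ) ≤ (m : ℝ) := Nat.cast_le.mpr hnm
        linarith
    linarith
  have hiInter : (⋂ n : ℕ, {ω | -(c + 1 / ((n : ℝ) + 1)) ≤ X ω}) = {ω | -c ≤ X ω} := by
    ext ω
    simp only [Set.mem_iInter, Set.mem_setOf_eq]
    constructor
    · intro h
      by_contra hcon
      push_neg at hcon
      obtain ⟨n, hn⟩ := exists_nat_one_div_lt (show (0 : ℝ) < -c - X ω by linarith)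
      have := h n
      linarith
    · intro h n
      have hpos : (0 : ℝ) < 1 / (n + 1) := by positivity
      linarith
  have htend : Filter.Tendsto (fun n : ℕ => μ {ω | -(c + 1 / ((n : ℝ) + 1)) ≤ X ω})
      Filter.atTop (nhds (μ {ω | -c ≤ X ω})) := by
    have := tendsto_measure_iInter_atTop (μ := μ)
      (fun n => (hmeas n).nullMeasurableSet) hanti ⟨0, measure_ne_top μ _⟩
    rw [hiInter] at this
    exact this
  exact ge_of_tendsto' htend fun n => hmemn n

lemma VaRE_eq_coe {μ : Measure Ω} [IsProbabilityMeasure μ] {X : Ω → ℝ} {α : ℝ}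
    (hne : (VaRset μ X α).Nonempty) (hbdd : BddBelow (VaRset μ X α)) (hX : Measurable X) :
    VaRE μ X α = ((sInf (VaRset μ X α) : ℝ) : EReal) := by
  rw [VaRE_eq_sInf]
  apply le_antisymm
  · exact sInf_le (Set.mem_image_of_mem _ (VaRset_csInf_mem hne hbdd hX))
  · refine le_sInf ?_
    rintro y ⟨x, hx, rfl⟩
    show ((sInf (VaRset μ X α) : ℝ) : EReal) ≤ (x : EReal)
    exact_mod_cast csInf_le hbdd hx

lemma VaRE_eq_top {μ : Measure Ω} {X : Ω → ℝ} {α : ℝ} (h : VaRset μ X α = ∅) :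
    VaRE μ X α = ⊤ := by
  rw [VaRE_eq_sInf, h, Set.image_empty, sInf_empty]

lemma VaRE_ne_bot {μ : Measure Ω} [IsProbabilityMeasure μ] {X : Ω → ℝ} {α : ℝ}
    (hα : 0 < α) (hX : Measurable X) : VaRE μ X α ≠ ⊥ := by
  rcases Set.eq_empty_or_nonempty (VaRset μ X α) with h | h
  · rw [VaRE_eq_top h]; exact top_ne_bot
  · rw [VaRE_eq_coe h (VaRset_bddBelow hα hX) hX]
    exact EReal.coe_ne_bot _

lemma upper_comparable {Z : Ω → ℝ} {u v : ℝ → ℝ} (hu : Monotone u) (hv : Monotone v)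
    (a b : ℝ) :
    {ω | a ≤ u (Z ω)} ⊆ {ω | b ≤ v (Z ω)} ∨ {ω | b ≤ v (Z ω)} ⊆ {ω | a ≤ u (Z ω)} := by
  rw [or_iff_not_imp_left]
  intro h
  obtain ⟨ω₁, h1, h1'⟩ := Set.not_subset.mp h
  intro ω₂ h2
  simp only [Set.mem_setOf_eq] at *
  rcases le_total (Z ω₂) (Z ω₁) with hle | hle
  · exact absurd (le_trans h2 (hv hle)) h1'
  · exact le_trans h1 (hu hle)

lemma VaRset_sum_mem {μ : Measure Ω} {Z : Ω → ℝ} {u v : ℝ → ℝ} {α a b : ℝ}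
    (hu : Monotone u) (hv : Monotone v)
    (ha : a ∈ VaRset μ (fun ω => u (Z ω)) α) (hb : b ∈ VaRset μ (fun ω => v (Z ω)) α) :
    a + b ∈ VaRset μ (fun ω => u (Z ω) + v (Z ω)) α := by
  have hsub : {ω | -a ≤ u (Z ω)} ∩ {ω | -b ≤ v (Z ω)} ⊆ {ω | -(a + b) ≤ u (Z ω) + v (Z ω)} := by
    rintro ω ⟨h1, h2⟩
    simp only [Set.mem_setOf_eq] at *
    linarith
  have hmin : ENNReal.ofReal α ≤ μ ({ω | -a ≤ u (Z ω)} ∩ {ω | -b ≤ v (Z ω)}) := by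
    rcases upper_comparable (Z := Z) hu hv (-a) (-b) with h | h
    · rw [Set.inter_eq_left.mpr h]; exact ha
    · rw [Set.inter_eq_right.mpr h]; exact hb
  exact le_trans hmin (measure_mono hsub)

lemma decomp {μ : Measure Ω} [IsProbabilityMeasure μ] {Z : Ω → ℝ} {u v : ℝ → ℝ} {α x : ℝ}
    (hu : Monotone u) (hv : Monotone v) (hα : 0 < α)
    (hx : x ∈ VaRset μ (fun ω => u (Z ω) + v (Z ω)) α) :
    ∃ p q : ℝ, p + q ≤ x ∧ p ∈ VaRset μ (fun ω => u (Z ω)) α ∧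
      q ∈ VaRset μ (fun ω => v (Z ω)) α := by
  set T : Set ℝ := {t | -x ≤ u t + v t} with hT
  have hxset : {ω | -x ≤ u (Z ω) + v (Z ω)} = Z ⁻¹' T := rfl
  have hTne : T.Nonempty := by
    by_contra h
    rw [Set.not_nonempty_iff_eq_empty] at h
    have h0 : μ {ω | -x ≤ u (Z ω) + v (Z ω)} = 0 := by
      rw [hxset, h]; simp
    have := hx
    rw [show (VaRset μ (fun ω => u (Z ω) + v (Z ω)) α : Set ℝ) =
      {y | ENNReal.ofReal α ≤ μ {ω | -y ≤ u (Z ω) + v (Z ω)}} from rfl] at this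
    simp only [Set.mem_setOf_eq, h0, le_zero_iff] at this
    exact absurd this (ENNReal.ofReal_pos.mpr hα).ne'
  obtain ⟨t₀, ht₀⟩ := hTne
  have hbu : BddBelow (u '' T) := by
    refine ⟨min (u t₀) (-x - v t₀), ?_⟩
    rintro _ ⟨t, ht, rfl⟩
    rcases le_total t t₀ with h | h
    · have hv' : v t ≤ v t₀ := hv h
      have hut : -x ≤ u t + v t := ht
      exact le_trans (min_le_right _ _) (by linarith)
    · exact le_trans (min_le_left _ _) (hu h)
  have hbv : BddBelow (v '' T) := by
    refine ⟨min (v t₀) (-x - u t₀), ?_⟩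
    rintro _ ⟨t, ht, rfl⟩
    rcases le_total t t₀ with h | h
    · have hu' : u t ≤ u t₀ := hu h
      have hut : -x ≤ u t + v t := ht
      exact le_trans (min_le_right _ _) (by linarith)
    · exact le_trans (min_le_left _ _) (hv h)
  set a := sInf (u '' T) with ha
  set b := sInf (v '' T) with hb
  have hab : -x ≤ a + b := by
    by_contra h
    push_neg at h
    set ε := (-x - (a + b)) / 2 with hε
    have hε0 : 0 < ε := by simp only [hε]; linarith
    have himu : (u '' T).Nonempty := ⟨u t₀, t₀, ht₀, rfl⟩
    have himv : (v '' T).Nonempty := ⟨v t₀, t₀, ht₀, rfl⟩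
    obtain ⟨_, ⟨t₁, ht₁, rfl⟩, h1⟩ :=
      exists_lt_of_csInf_lt himu (show sInf (u '' T) < a + ε by rw [← ha]; linarith)
    obtain ⟨_, ⟨t₂, ht₂, rfl⟩, h2⟩ :=
      exists_lt_of_csInf_lt himv (show sInf (v '' T) < b + ε by rw [← hb]; linarith)
    have htmem : min t₁ t₂ ∈ T := by
      rcases le_total t₁ t₂ with hle | hle
      · rwa [min_eq_left hle]
      · rwa [min_eq_right hle]
    have hut : u (min t₁ t₂) ≤ u t₁ := hu (min_le_left _ _)
    have hvt : v (min t₁ t₂) ≤ v t₂ := hv (min_le_right _ _)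
    have hsum : -x ≤ u (min t₁ t₂) + v (min t₁ t₂) := htmem
    simp only [hε] at h1 h2
    linarith
  refine ⟨-a, -b, by linarith, ?_, ?_⟩
  · refine le_trans hx (measure_mono fun ω hω => ?_)
    have hmem : Z ω ∈ T := hω
    have : a ≤ u (Z ω) := csInf_le hbu ⟨Z ω, hmem, rfl⟩
    simp only [Set.mem_setOf_eq, neg_neg]
    exact this
  · refine le_trans hx (measure_mono fun ω hω => ?_)
    have hmem : Z ω ∈ T := hω
    have : b ≤ v (Z ω) := csInf_le hbv ⟨Z ω, hmem, rfl⟩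
    simp only [Set.mem_setOf_eq, neg_neg]
    exact this

end Aux

/-- Value-at-risk is comonotonic additive. -/
theorem var_comonotonic_additive {Ω : Type*} [MeasurableSpace Ω] (μ : Measure Ω)
    [IsProbabilityMeasure μ] (α : ℝ) (hα : α ∈ Set.Ioc (0 : ℝ) 1)
    (Z : Ω → ℝ) (hZ : Measurable Z) (f g : ℝ → ℝ) (hf : Monotone f) (hg : Monotone g) :
    VaRE μ (fun ω => f (Z ω) + g (Z ω)) α
      = VaRE μ (fun ω => f (Z ω)) α + VaRE μ (fun ω => g (Z ω)) α := by
  have hα0 : 0 < α := hα.1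
  have hmf : Measurable fun ω => f (Z ω) := hf.measurable.comp hZ
  have hmg : Measurable fun ω => g (Z ω) := hg.measurable.comp hZ
  have hmw : Measurable fun ω => f (Z ω) + g (Z ω) := hmf.add hmg
  rcases Set.eq_empty_or_nonempty (VaRset μ (fun ω => f (Z ω)) α) with hu | hu
  · have hw : VaRset μ (fun ω => f (Z ω) + g (Z ω)) α = ∅ := by
      rw [Set.eq_empty_iff_forall_notMem]
      intro x hx
      obtain ⟨p, q, _, hp, _⟩ := decomp (μ := μ) (Z := Z) hf hg hα0 hx
      rw [hu] at hp
      exact hp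
    rw [VaRE_eq_top hw, VaRE_eq_top hu]
    exact (EReal.top_add_of_ne_bot (VaRE_ne_bot hα0 hmg)).symm
  rcases Set.eq_empty_or_nonempty (VaRset μ (fun ω => g (Z ω)) α) with hv | hv
  · have hw : VaRset μ (fun ω => f (Z ω) + g (Z ω)) α = ∅ := by
      rw [Set.eq_empty_iff_forall_notMem]
      intro x hx
      obtain ⟨p, q, _, _, hq⟩ := decomp (μ := μ) (Z := Z) hf hg hα0 hx
      rw [hv] at hq
      exact hq
    rw [VaRE_eq_top hw, VaRE_eq_top hv]
    exact (EReal.add_top_of_ne_bot (VaRE_ne_bot hα0 hmf)).symm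
  · have hbu := VaRset_bddBelow (μ := μ) hα0 hmf
    have hbv := VaRset_bddBelow (μ := μ) hα0 hmg
    have hcu := VaRset_csInf_mem hu hbu hmf
    have hcv := VaRset_csInf_mem hv hbv hmg
    have hwmem := VaRset_sum_mem hf hg hcu hcv
    have hwne : (VaRset μ (fun ω => f (Z ω) + g (Z ω)) α).Nonempty := ⟨_, hwmem⟩
    have hbw := VaRset_bddBelow (μ := μ) hα0 hmw
    have heq : sInf (VaRset μ (fun ω => f (Z ω) + g (Z ω)) α)
        = sInf (VaRset μ (fun ω => f (Z ω)) α) + sInf (VaRset μ (fun ω => g (Z ω)) α) := by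
      apply le_antisymm
      · exact csInf_le hbw hwmem
      · refine le_csInf hwne fun x hx => ?_
        obtain ⟨p, q, hpq, hp, hq⟩ := decomp (μ := μ) (Z := Z) hf hg hα0 hx
        have h1 := csInf_le hbu hp
        have h2 := csInf_le hbv hq
        linarith
    rw [VaRE_eq_coe hwne hbw hmw, VaRE_eq_coe hu hbu hmf, VaRE_eq_coe hv hbv hmg, heq,
      EReal.coe_add]
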